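/- Let D be a (v,k,2)-biplane with k ≥ 3, in which any two distinct blocks intersect in exactly two points. Then the graph Γ₂(D) is triangle-free; equivalently, any two adjacent vertices of Γ₂(D) have no common neighbour. -/

import Mathlib

/-- A `(v,b,r,k,lam)`-balanced incomplete block design: a finite set of `v` points and a
family of `b` distinct blocks, each block a `k`-element subset of the points with
`1 < k < v`, such that every point lies in exactly `r` blocks and every pair of distinct
points is contained in exactly `lam` blocks (all parameters positive). -/
structure BIBD (v b r k lam : ℕ) where
  P : Type
  [fintypeP : Fintype P]
  [decEqP : DecidableEq P]
  blocks : Finset (Finset P)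
  card_points : Fintype.card P = v
  card_blocks : blocks.card = b
  block_size : ∀ c ∈ blocks, c.card = k
  one_lt_k : 1 < k
  k_lt_v : k < v
  lam_pos : 0 < lam
  point_deg : ∀ p : P, (blocks.filter (fun c => p ∈ c)).card = r
  pair_deg : ∀ p q : P, p ≠ q → (blocks.filter (fun c => p ∈ c ∧ q ∈ c)).card = lam

attribute [instance] BIBD.fintypeP BIBD.decEqP

variable {v b r k lam : ℕ}

/-- A flag of a BIBD: an incident point-block pair `(p, c)` with `p ∈ c`. -/
def BIBD.Flag (D : BIBD v b r k lam) : Type :=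
  {pc : D.P × Finset D.P // pc.2 ∈ D.blocks ∧ pc.1 ∈ pc.2}

instance (D : BIBD v b r k lam) : Fintype D.Flag :=
  inferInstanceAs (Fintype {pc : D.P × Finset D.P // pc.2 ∈ D.blocks ∧ pc.1 ∈ pc.2})

instance (D : BIBD v b r k lam) : DecidableEq D.Flag :=
  inferInstanceAs (DecidableEq {pc : D.P × Finset D.P // pc.2 ∈ D.blocks ∧ pc.1 ∈ pc.2})

/-- The graph `Γ₂(D)` on the flags of a `(v,k,2)`-biplane: flags `(p,c)` and `(q,d)` are
adjacent iff `p ≠ q` and `c ∩ d = {p, q}`. -/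
def BIBD.Gamma2 (D : BIBD v v k k 2) : SimpleGraph D.Flag where
  Adj x y := x.1.1 ≠ y.1.1 ∧ x.1.2 ∩ y.1.2 = {x.1.1, y.1.1}
  symm := ⟨fun _ _ h => ⟨h.1.symm, by rw [Finset.inter_comm, h.2, Finset.pair_comm]⟩⟩
  loopless := ⟨fun _ h => h.1 rfl⟩

instance (D : BIBD v v k k 2) : DecidableRel D.Gamma2.Adj :=
  fun x y => inferInstanceAs (Decidable (x.1.1 ≠ y.1.1 ∧ x.1.2 ∩ y.1.2 = {x.1.1, y.1.1}))

/-- The graph `Γ₂(D)` of a `(v,k,2)`-biplane with `k ≥ 3` is triangle-free; equivalently,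
any two adjacent vertices have no common neighbour. -/
theorem gamma2_triangle_free (D : BIBD v v k k 2) (hk : 3 ≤ k)
    (hInt : ∀ c ∈ D.blocks, ∀ d ∈ D.blocks, c ≠ d → (c ∩ d).card = 2) :
    D.Gamma2.CliqueFree 3 ∧
    ∀ x y : D.Flag, D.Gamma2.Adj x y →
      D.Gamma2.neighborFinset x ∩ D.Gamma2.neighborFinset y = ∅ := by
  have key : ∀ x y z : D.Flag, D.Gamma2.Adj x y → D.Gamma2.Adj x z → D.Gamma2.Adj y z →
      False := by
    intro x y z hxy hxz hyz
    have hz1 : z.1.1 ∈ x.1.2 := by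
      have : z.1.1 ∈ x.1.2 ∩ z.1.2 := by
        rw [hxz.2]; simp
      exact (Finset.mem_inter.mp this).1
    have hz2 : z.1.1 ∈ y.1.2 := by
      have : z.1.1 ∈ y.1.2 ∩ z.1.2 := by
        rw [hyz.2]; simp
      exact (Finset.mem_inter.mp this).1
    have : z.1.1 ∈ x.1.2 ∩ y.1.2 := Finset.mem_inter.mpr ⟨hz1, hz2⟩
    rw [hxy.2] at this
    rcases Finset.mem_insert.mp this with h | h
    · exact hxz.1 h.symm
    · exact hyz.1 (Finset.mem_singleton.mp h).symm
  constructor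
  · intro t ht
    rw [SimpleGraph.is3Clique_iff] at ht
    obtain ⟨a, b, c, hab, hac, hbc, -⟩ := ht
    exact key a b c hab hac hbc
  · intro x y hxy
    rw [Finset.eq_empty_iff_forall_notMem]
    intro z hz
    rw [Finset.mem_inter, SimpleGraph.mem_neighborFinset,
      SimpleGraph.mem_neighborFinset] at hz
    exact key x y z hxy hz.1 hz.2
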